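/- arXiv:2501.14799 — 2 statements merged into one kernel-verified Lean document; each statement's English description precedes it below -/
import Mathlib

section
/- Let M be a cm-monoid. Then (1) the algebra M^ca is a clone algebra, and (2) if M is finite dimensional then M^ca is a finite dimensional clone algebra. -/
universe u

open scoped Classical

/-- A finite permutation of ω: an element of S_ω, i.e. a permutation moving
only finitely many points. -/
def FinPerm (σ : Equiv.Perm ℕ) : Prop := {n : ℕ | σ n ≠ n}.Finite

/-- The raw operations of a merge algebra: the binary merges `⋆_n` and the
actions `σ̄` of (finite) permutations. -/
structure MergeOps (A : Type u) where
  star : ℕ → A → A → A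
  bar : Equiv.Perm ℕ → A → A

namespace MergeOps

variable {A : Type u}

/-- `chain g k = ((g 0 ⋆_1 g 1) ⋆_2 g 2) … ⋆_k (g k)`. -/
def chain (M : MergeOps A) (g : ℕ → A) : ℕ → A
  | 0 => g 0
  | i + 1 => M.star (i + 1) (M.chain g i) (g (i + 1))

/-- `chainStar g k y = ((…(g 0 ⋆_1 g 1) ⋆_2 …) ⋆_{k-1} g (k-1)) ⋆_k y`. -/
def chainStar (M : MergeOps A) (g : ℕ → A) (k : ℕ) (y : A) : A :=
  match k with
  | 0 => y
  | k + 1 => M.star (k + 1) (M.chain g k) y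

/-- The `n`-coordinate of `x` relative to the coordinator `pt`:
`x[n] = τ̄^n_0(x) ⋆_1 pt`. -/
def coord (M : MergeOps A) (pt x : A) (n : ℕ) : A :=
  M.star 1 (M.bar (Equiv.swap 0 n) x) pt

end MergeOps

/-- A merge algebra: operations `⋆_n` and `σ̄` satisfying axioms (B1)–(B7). -/
structure MergeAlgebra (A : Type u) extends MergeOps A where
  /-- (B1) each `⋆_n` is associative -/
  star_assoc : ∀ (n : ℕ) (x y z : A), star n (star n x y) z = star n x (star n y z)
  /-- (B1) each `⋆_n` is idempotent -/
  star_idem : ∀ (n : ℕ) (x : A), star n x x = x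
  /-- (B2) -/
  star_zero : ∀ x y : A, star 0 x y = y
  /-- (B3), first part (k ≥ n) -/
  B3a : ∀ {n k : ℕ}, n ≤ k → ∀ x y z : A, star n (star k x y) z = star n x z
  /-- (B3), second part (k ≥ n) -/
  B3b : ∀ {n k : ℕ}, n ≤ k → ∀ x y z : A, star k x (star n y z) = star k x z
  /-- (B4) (k < n) -/
  B4 : ∀ {n k : ℕ}, k < n → ∀ x y z : A, star n (star k x y) z = star k x (star n y z)
  /-- (B5) `σ̄(τ̄(x)) = (τ∘σ)‾(x)` -/
  B5 : ∀ σ τ : Equiv.Perm ℕ, FinPerm σ → FinPerm τ → ∀ x : A,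
      bar σ (bar τ x) = bar (τ * σ) x
  /-- (B5) `ῑ(x) = x` -/
  bar_id : ∀ x : A, bar 1 x = x
  /-- (B6): for `n ≤ k` and `σ` a permutation of `k`, with `f i = x` iff `σ i < n`:
  `σ̄(x ⋆_n y) = ((…(σ̄(f 0) ⋆_1 σ̄(f 1)) ⋆_2 …) ⋆_{k-1} σ̄(f (k-1))) ⋆_k y`. -/
  B6 : ∀ {n k : ℕ}, n ≤ k → ∀ σ : Equiv.Perm ℕ, (∀ i, k ≤ i → σ i = i) →
      ∀ x y : A, bar σ (star n x y) =
        toMergeOps.chainStar (fun i => bar σ (if σ i < n then x else y)) k y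
  /-- (B7) -/
  B7 : ∀ {m n : ℕ} (σ τ : Equiv.Perm ℕ), FinPerm σ → FinPerm τ →
      (∀ i, m ≤ i → i < n → σ i = τ i) →
      ∀ x y z : A, star n (star m z (bar σ x)) y = star n (star m z (bar τ x)) y

/-- An m-monoid: a monoid structure together with a merge algebra structure on
the same carrier, satisfying right distributivity (L1). -/
structure MMonoid (A : Type u) extends MergeAlgebra A where
  mul : A → A → A
  one : A
  mul_assoc : ∀ x y z : A, mul (mul x y) z = mul x (mul y z)
  one_mul : ∀ x : A, mul one x = x
  mul_one : ∀ x : A, mul x one = x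
  /-- (L1) right distributivity -/
  L1 : ∀ (n : ℕ) (x y z : A), mul (star n x y) z = star n (mul x z) (mul y z)

namespace MMonoid

variable {A : Type u} (M : MMonoid A)

/-- A cm-monoid is an m-monoid satisfying (L2): `σ̄(x)·y = σ̄(x·y)`. -/
def IsCM : Prop :=
  ∀ σ : Equiv.Perm ℕ, FinPerm σ → ∀ x y : A, M.mul (M.bar σ x) y = M.bar σ (M.mul x y)

/-- An am-monoid is an m-monoid satisfying (L3): `σ̄(x·y) = σ̄(x)·σ̄(y)`. -/
def IsAM : Prop :=
  ∀ σ : Equiv.Perm ℕ, FinPerm σ → ∀ x y : A, M.bar σ (M.mul x y) = M.mul (M.bar σ x) (M.bar σ y)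

/-- The `n`-coordinate `x[n] = τ̄^n_0(x) ⋆_1 1` (the coordinator is the unit). -/
def coord (x : A) (n : ℕ) : A := M.toMergeOps.coord M.one x n

/-- Extensionality: elements with the same coordinates are equal. -/
def Extensional : Prop := ∀ x y : A, (∀ n : ℕ, M.coord x n = M.coord y n) → x = y

/-- An element has rank ≤ n iff `x ⋆_n 1 = x`; the m-monoid is finitely ranked
if every element has finite rank. -/
def FinitelyRanked : Prop := ∀ x : A, ∃ n : ℕ, M.star n x M.one = x

/-- A degenerate m-monoid. -/
def Degenerate : Prop :=
  (∀ σ : Equiv.Perm ℕ, FinPerm σ → ∀ x : A, M.bar σ x = x) ∧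
    (∀ (n : ℕ) (x y : A), M.star n x y = y)

/-- `a` is finite dimensional: for every `n` there is `m` with
`(a·(1 ⋆_m b ⋆_{m+k} 1)) ⋆_n a = a` for all `b` and `k`. -/
def FinDimEl (a : A) : Prop :=
  ∀ n : ℕ, ∃ m : ℕ, ∀ (b : A) (k : ℕ),
    M.star n (M.mul a (M.star (m + k) (M.star m M.one b) M.one)) a = a

/-- `a` is ω-finite dimensional: for every `n` there is `m` with
`(a·(1 ⋆_m b)) ⋆_n a = a` for all `b`. -/
def OmegaFinDimEl (a : A) : Prop :=
  ∀ n : ℕ, ∃ m : ℕ, ∀ b : A,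
    M.star n (M.mul a (M.star m M.one b)) a = a

/-- An m-monoid is finite dimensional if every element is. -/
def FinDim : Prop := ∀ a : A, M.FinDimEl a

/-- An m-monoid is ω-finite dimensional if every element is. -/
def OmegaFinDim : Prop := ∀ a : A, M.OmegaFinDimEl a

end MMonoid

/-- A clone algebra: constants `e_n` and operations `q_n` of arity `n+1`
satisfying axioms (C1)–(C5). -/
structure CloneAlgebra (A : Type u) where
  e : ℕ → A
  q : (n : ℕ) → A → (Fin n → A) → A
  /-- (C1) -/
  C1 : ∀ (n : ℕ) (i : Fin n) (x : Fin n → A), q n (e i) x = x i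
  /-- (C2) -/
  C2 : ∀ (n j : ℕ) (x : Fin n → A), n ≤ j → q n (e j) x = e j
  /-- (C3) -/
  C3 : ∀ (n : ℕ) (x : A), q n x (fun i => e i) = x
  /-- (C4) -/
  C4 : ∀ (n k : ℕ), n < k → ∀ (x : A) (y : Fin n → A),
      q n x y = q k x (fun i => if h : (i : ℕ) < n then y ⟨i, h⟩ else e i)
  /-- (C5) -/
  C5 : ∀ (n : ℕ) (x : A) (y z : Fin n → A),
      q n (q n x y) z = q n x (fun i => q n (y i) z)

namespace CloneAlgebra

variable {A : Type u} (C : CloneAlgebra A)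

/-- `a` is independent of `e_n` if `q_{n+1}(a, e_0, …, e_{n-1}, e_{n+1}) = a`. -/
def IndepOf (a : A) (n : ℕ) : Prop :=
  C.q (n + 1) a (fun i => if (i : ℕ) < n then C.e i else C.e (n + 1)) = a

/-- A clone algebra is finite dimensional if every element depends on only
finitely many `e_n`. -/
def FinDim : Prop := ∀ a : A, {n : ℕ | ¬ C.IndepOf a n}.Finite

end CloneAlgebra

namespace MMonoid

variable {A : Type u} (M : MMonoid A)

/-- `b̂_0 = b_0`, `b̂_{i+1} = b̂_i ⋆_{i+1} τ̄^{i+1}_0(b_{i+1})`. -/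
def hatSeq (b : ℕ → A) : ℕ → A
  | 0 => b 0
  | i + 1 => M.star (i + 1) (hatSeq b i) (M.bar (Equiv.swap 0 (i + 1)) (b (i + 1)))

/-- `b̂_{n-1}` for a finite tuple `b_0, …, b_{n-1}` (the unit for `n = 0`). -/
def hatFin : (n : ℕ) → (Fin n → A) → A
  | 0, _ => M.one
  | n + 1, b => M.hatSeq (fun i => if h : i < n + 1 then b ⟨i, h⟩ else M.one) n

end MMonoid

namespace MMonoid

variable {A : Type u} (M : MMonoid A)

lemma finPerm_swap (a b : ℕ) : FinPerm (Equiv.swap a b) := by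
  apply Set.Finite.subset (Set.Finite.insert a (Set.finite_singleton b))
  intro n hn
  simp only [Set.mem_setOf_eq] at hn
  by_contra hc
  rw [Set.mem_insert_iff, Set.mem_singleton_iff] at hc
  push_neg at hc
  exact hn (Equiv.swap_apply_of_ne_of_ne hc.1 hc.2)

lemma bar_swap_swap (i j : ℕ) (x : A) :
    M.bar (Equiv.swap i j) (M.bar (Equiv.swap i j) x) = x := by
  rw [M.B5 _ _ (finPerm_swap i j) (finPerm_swap i j), Equiv.swap_mul_self]
  exact M.bar_id x

lemma bar_swap_self (x : A) : M.bar (Equiv.swap 0 0) x = x := by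
  rw [Equiv.swap_self]
  exact M.bar_id x

lemma chain_succ (g : ℕ → A) (j : ℕ) :
    M.toMergeOps.chain g (j + 1) = M.star (j + 1) (M.toMergeOps.chain g j) (g (j + 1)) := rfl

lemma chainStar_succ (g : ℕ → A) (k : ℕ) (y : A) :
    M.toMergeOps.chainStar g (k + 1) y = M.star (k + 1) (M.toMergeOps.chain g k) y := rfl

/-- F1: the first coordinate of a chain is its first entry. -/
lemma star_one_chain (g : ℕ → A) (j : ℕ) (z : A) :
    M.star 1 (M.toMergeOps.chain g j) z = M.star 1 (g 0) z := by
  induction j with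
  | zero => rfl
  | succ j ih => rw [chain_succ, M.B3a (Nat.succ_le_succ (Nat.zero_le j)), ih]

/-- F2: merging a chain at its top index only uses the top entry. -/
lemma star_chain (g : ℕ → A) (m : ℕ) (h z : A) :
    M.star (m + 1) h (M.star (m + 2) (M.toMergeOps.chain g (m + 1)) z)
      = M.star (m + 2) (M.star (m + 1) h (g (m + 1))) z := by
  rw [chain_succ, ← M.B4 (Nat.lt_succ_self (m + 1)), M.B3b (le_refl (m + 1))]

/-- Master lemma 1: the first coordinate of `σ̄(x ⋆_n y)` for `σ = (0 s)`. -/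
lemma coord_bar_star {n s k : ℕ} (h1 : n ≤ k) (h2 : s < k) (X Y z : A) :
    M.star 1 (M.bar (Equiv.swap 0 s) (M.star n X Y)) z
      = M.star 1 (M.bar (Equiv.swap 0 s) (if s < n then X else Y)) z := by
  obtain ⟨k', rfl⟩ : ∃ k', k = k' + 1 := ⟨k - 1, by omega⟩
  rw [M.B6 (n := n) (k := k' + 1) h1 (Equiv.swap 0 s)
      (fun i hi => Equiv.swap_apply_of_ne_of_ne (by omega) (by omega)) X Y]
  rw [chainStar_succ, M.B3a (Nat.succ_le_succ (Nat.zero_le k')), star_one_chain]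
  rw [Equiv.swap_apply_left]

/-- Master lemma 2: merging `σ̄(X ⋆_1 Y)` at index `m+1`, `σ = (0, m+1)`. -/
lemma star_bar_eval (m : ℕ) (h X Y : A) :
    M.star (m + 1) h (M.bar (Equiv.swap 0 (m + 1)) (M.star 1 X Y))
      = M.star (m + 2) (M.star (m + 1) h (M.bar (Equiv.swap 0 (m + 1)) X)) Y := by
  rw [M.B6 (n := 1) (k := m + 2) (by omega) (Equiv.swap 0 (m + 1))
      (fun i hi => Equiv.swap_apply_of_ne_of_ne (by omega) (by omega)) X Y]
  rw [chainStar_succ, star_chain]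
  rw [Equiv.swap_apply_right]
  norm_num

/-- `σ̄(X ⋆_1 Y)` has rank ≤ m+2 relative to `Y`, `σ = (0, m+1)`. -/
lemma bar_swap_star_rank (m : ℕ) (X Y : A) :
    M.star (m + 2) (M.bar (Equiv.swap 0 (m + 1)) (M.star 1 X Y)) Y
      = M.bar (Equiv.swap 0 (m + 1)) (M.star 1 X Y) := by
  rw [M.B6 (n := 1) (k := m + 2) (by omega) (Equiv.swap 0 (m + 1))
      (fun i hi => Equiv.swap_apply_of_ne_of_ne (by omega) (by omega)) X Y]
  rw [chainStar_succ, M.star_assoc, M.star_idem]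

lemma rank_mono {x : A} {m j : ℕ} (hx : M.star m x M.one = x) (hmj : m ≤ j) :
    M.star j x M.one = x := by
  rcases eq_or_lt_of_le hmj with rfl | hlt
  · exact hx
  · conv_lhs => rw [← hx]
    rw [M.B4 hlt, M.star_idem, hx]

/-- D1 with arbitrary continuation. -/
lemma star_bar_coord (m : ℕ) (h x z : A) :
    M.star (m + 2)
      (M.star (m + 1) h
        (M.bar (Equiv.swap 0 (m + 1)) (M.star 1 (M.bar (Equiv.swap 0 (m + 1)) x) M.one))) z
      = M.star (m + 2) (M.star (m + 1) h x) z := by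
  rw [star_bar_eval, bar_swap_swap, M.B3a (le_refl (m + 2))]

/-- the value of `e_n`. -/
def eV (n : ℕ) : A := M.star 1 (M.bar (Equiv.swap 0 n) M.one) M.one

lemma eV_rank (n : ℕ) : M.star 1 (M.eV n) M.one = M.eV n :=
  M.B3a (le_refl 1) _ _ _

lemma eV_zero : M.eV 0 = M.one := by
  rw [eV, bar_swap_self, M.star_idem]

lemma one_rank : M.star 1 M.one M.one = M.one := M.star_idem 1 M.one

/-- absorption of `τ̄^{m+1}(e_{m+1})` at index `m+1`. -/
lemma star_eV (m : ℕ) (h : A) (hh : M.star (m + 1) h M.one = h) :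
    M.star (m + 1) h (M.bar (Equiv.swap 0 (m + 1)) (M.eV (m + 1))) = h := by
  rw [eV, star_bar_eval, bar_swap_swap, hh]
  exact rank_mono M hh (by omega)

lemma hatSeq_succ (b : ℕ → A) (j : ℕ) :
    M.hatSeq b (j + 1)
      = M.star (j + 1) (M.hatSeq b j) (M.bar (Equiv.swap 0 (j + 1)) (b (j + 1))) := rfl

lemma hatSeq_congr {b b' : ℕ → A} (j : ℕ) (hbb : ∀ l ≤ j, b l = b' l) :
    M.hatSeq b j = M.hatSeq b' j := by
  induction j with
  | zero => exact hbb 0 (le_refl 0)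
  | succ j ih =>
      rw [hatSeq_succ, hatSeq_succ, ih (fun l hl => hbb l (by omega)), hbb (j + 1) (le_refl _)]

lemma hatSeq_rank (b : ℕ → A) (hb : ∀ l, M.star 1 (b l) M.one = b l) (j : ℕ) :
    M.star (j + 1) (M.hatSeq b j) M.one = M.hatSeq b j := by
  induction j with
  | zero => exact hb 0
  | succ j ih =>
      rw [hatSeq_succ, M.B4 (Nat.lt_succ_self (j + 1))]
      conv_lhs => rw [← hb (j + 1)]
      conv_rhs => rw [← hb (j + 1)]
      rw [bar_swap_star_rank]

/-- H1: the `i`-th coordinate of `hatSeq b j` is `b i`, for `i ≤ j`. -/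
lemma coord_hat (b : ℕ → A) (hb : ∀ l, M.star 1 (b l) M.one = b l) {i j : ℕ} (hij : i ≤ j) :
    M.star 1 (M.bar (Equiv.swap 0 i) (M.hatSeq b j)) M.one = b i := by
  induction j with
  | zero =>
      obtain rfl : i = 0 := Nat.le_zero.mp hij
      show M.star 1 (M.bar (Equiv.swap 0 0) (b 0)) M.one = b 0
      rw [bar_swap_self]; exact hb 0
  | succ j ih =>
      by_cases hij' : i ≤ j
      · rw [hatSeq_succ, M.coord_bar_star (n := j + 1) (k := j + 1) (le_refl _) (by omega),
          if_pos (by omega)]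
        exact ih hij'
      · obtain rfl : i = j + 1 := by omega
        rw [hatSeq_succ, M.coord_bar_star (n := j + 1) (k := j + 2) (by omega) (by omega),
          if_neg (by omega), bar_swap_swap]
        exact hb (j + 1)

/-- H2: coordinates above the rank are trivial. -/
lemma coord_high {x : A} {n j : ℕ} (hx : M.star n x M.one = x) (hnj : n ≤ j) :
    M.star 1 (M.bar (Equiv.swap 0 j) x) M.one = M.eV j := by
  conv_lhs => rw [← hx]
  rw [M.coord_bar_star (n := n) (k := j + 1) (by omega) (by omega), if_neg (by omega)]
  rfl

lemma hatSeq_eV (b : ℕ → A) (j : ℕ) (hb : ∀ l ≤ j, b l = M.eV l) :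
    M.hatSeq b j = M.one := by
  induction j with
  | zero => show b 0 = M.one; rw [hb 0 (le_refl 0), eV_zero]
  | succ j ih =>
      rw [hatSeq_succ, ih (fun l hl => hb l (by omega)), hb (j + 1) (le_refl _)]
      exact star_eV M j M.one (M.star_idem _ _)

lemma hatSeq_strip (b : ℕ → A) (hb : ∀ l, M.star 1 (b l) M.one = b l) (j d : ℕ)
    (he : ∀ l, j < l → b l = M.eV l) :
    M.hatSeq b (j + d) = M.hatSeq b j := by
  induction d with
  | zero => rfl
  | succ d ih =>
      show M.hatSeq b (j + d + 1) = M.hatSeq b j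
      rw [hatSeq_succ, he (j + d + 1) (by omega),
        star_eV M (j + d) _ (hatSeq_rank M b hb (j + d)), ih]

end MMonoid

namespace MMonoid

variable {A : Type u} (M : MMonoid A)

lemma eV_mul (hcm : M.IsCM) (j : ℕ) (H : A) :
    M.mul (M.eV j) H = M.star 1 (M.bar (Equiv.swap 0 j) H) H := by
  rw [eV, M.L1, hcm _ (finPerm_swap 0 j), M.one_mul]

/-- H3 core: substitution lemma at the `hatSeq` level. -/
lemma hatSeq_subst (hcm : M.IsCM) (y w : ℕ → A) (Z : A) (i : ℕ)
    (hw : ∀ l ≤ i, w l = M.star 1 (M.mul (y l) Z) M.one) :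
    M.star (i + 1) (M.hatSeq w i) Z = M.star (i + 1) (M.mul (M.hatSeq y i) Z) Z := by
  induction i with
  | zero =>
      show M.star 1 (w 0) Z = M.star 1 (M.mul (y 0) Z) Z
      rw [hw 0 (le_refl 0), M.B3a (le_refl 1)]
  | succ i ih =>
      have ih' := ih (fun l hl => hw l (by omega))
      have key : ∀ Q : A, M.star (i + 1) (M.hatSeq w i) Q
          = M.star (i + 1) (M.mul (M.hatSeq y i) Z) Q := by
        intro Q
        calc M.star (i + 1) (M.hatSeq w i) Q
            = M.star (i + 1) (M.star (i + 1) (M.hatSeq w i) Z) Q :=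
              (M.B3a (le_refl (i + 1)) _ _ _).symm
          _ = M.star (i + 1) (M.star (i + 1) (M.mul (M.hatSeq y i) Z) Z) Q := by rw [ih']
          _ = M.star (i + 1) (M.mul (M.hatSeq y i) Z) Q := M.B3a (le_refl (i + 1)) _ _ _
      rw [hatSeq_succ, M.B4 (Nat.lt_succ_self (i + 1)), key, ← M.B4 (Nat.lt_succ_self (i + 1))]
      rw [hw (i + 1) (le_refl _)]
      conv_lhs =>
        rw [show M.mul (y (i + 1)) Z
            = M.bar (Equiv.swap 0 (i + 1)) (M.bar (Equiv.swap 0 (i + 1)) (M.mul (y (i + 1)) Z))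
            from (bar_swap_swap M _ _ _).symm]
      rw [star_bar_coord]
      rw [← hcm _ (finPerm_swap 0 (i + 1)), ← M.L1, ← hatSeq_succ]

end MMonoid

namespace MMonoid

variable {A : Type u} (M : MMonoid A)

lemma star_rank_absorb {k : ℕ} {z : A} (hz : M.star k z M.one = z) (w : A) :
    M.star k w z = M.star k w M.one := by
  conv_lhs => rw [← hz]
  exact M.B3b (le_refl k) w z M.one

lemma mul_rank_absorb {k : ℕ} {x : A} (hx : M.star k x M.one = x) (z : A) :
    M.star k (M.mul x z) z = M.mul x z := by
  conv_rhs => rw [← hx, M.L1, M.one_mul]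

/-- padding a tuple with the `e`'s does not change the hat. -/
lemma hatFin_pad {n k : ℕ} (hnk : n < k) (y : Fin n → A)
    (hy : ∀ i, M.star 1 (y i) M.one = y i) :
    M.hatFin k (fun i => if h : (i : ℕ) < n then y ⟨i, h⟩ else M.eV i) = M.hatFin n y := by
  obtain ⟨k, rfl⟩ : ∃ m, k = m + 1 := ⟨k - 1, by omega⟩
  have hctr : ∀ l, M.star 1 (if h : l < n then y ⟨l, h⟩ else M.eV l) M.one
      = if h : l < n then y ⟨l, h⟩ else M.eV l := by
    intro l
    by_cases hl : l < n
    · rw [dif_pos hl]; exact hy ⟨l, hl⟩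
    · rw [dif_neg hl]; exact M.eV_rank l
  have h1 : M.hatFin (k + 1) (fun i => if h : (i : ℕ) < n then y ⟨i, h⟩ else M.eV i)
      = M.hatSeq (fun l => if h : l < n then y ⟨l, h⟩ else M.eV l) k :=
    M.hatSeq_congr k (fun l hl => by rw [dif_pos (show l < k + 1 by omega)])
  rw [h1]
  rcases Nat.eq_zero_or_pos n with rfl | hn
  · show _ = M.one
    exact M.hatSeq_eV _ k (fun l hl => by rw [dif_neg (Nat.not_lt_zero l)])
  · obtain ⟨n', rfl⟩ : ∃ m, n = m + 1 := ⟨n - 1, by omega⟩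
    have h2 := M.hatSeq_strip (fun l => if h : l < n' + 1 then y ⟨l, h⟩ else M.eV l) hctr n'
      (k - n') (fun l hl => by beta_reduce; rw [dif_neg (show ¬ l < n' + 1 by omega)])
    rw [show n' + (k - n') = k by omega] at h2
    rw [h2]
    exact M.hatSeq_congr n' (fun l hl => by
      rw [dif_pos (show l < n' + 1 by omega), dif_pos (show l < n' + 1 by omega)])

/-- H3: the hat of the substituted tuple is the product of the hats. -/
lemma hatFin_subst (hcm : M.IsCM) (n : ℕ) (y z : Fin n → A)
    (hy : ∀ i, M.star 1 (y i) M.one = y i) (hz : ∀ i, M.star 1 (z i) M.one = z i) :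
    M.hatFin n (fun i => M.star 1 (M.mul (y i) (M.hatFin n z)) M.one)
      = M.mul (M.hatFin n y) (M.hatFin n z) := by
  cases n with
  | zero => show M.one = M.mul M.one M.one; rw [M.one_mul]
  | succ n =>
      obtain ⟨Z, hZdef⟩ : ∃ Z, Z = M.hatFin (n + 1) z := ⟨_, rfl⟩
      rw [← hZdef]
      have hzr : ∀ l, M.star 1 (if h : l < n + 1 then z ⟨l, h⟩ else M.one) M.one
          = if h : l < n + 1 then z ⟨l, h⟩ else M.one := by
        intro l
        by_cases hl : l < n + 1
        · rw [dif_pos hl]; exact hz ⟨l, hl⟩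
        · rw [dif_neg hl]; exact M.one_rank
      have hyr : ∀ l, M.star 1 (if h : l < n + 1 then y ⟨l, h⟩ else M.one) M.one
          = if h : l < n + 1 then y ⟨l, h⟩ else M.one := by
        intro l
        by_cases hl : l < n + 1
        · rw [dif_pos hl]; exact hy ⟨l, hl⟩
        · rw [dif_neg hl]; exact M.one_rank
      have hwr : ∀ l, M.star 1
            (if h : l < n + 1 then M.star 1 (M.mul (y ⟨l, h⟩) Z) M.one else M.one) M.one
          = if h : l < n + 1 then M.star 1 (M.mul (y ⟨l, h⟩) Z) M.one else M.one := by
        intro l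
        by_cases hl : l < n + 1
        · rw [dif_pos hl]; exact M.B3a (le_refl 1) _ _ _
        · rw [dif_neg hl]; exact M.one_rank
      have hZr : M.star (n + 1) Z M.one = Z := by
        rw [hZdef]; exact M.hatSeq_rank _ hzr n
      have hsub := M.hatSeq_subst hcm (fun l => if h : l < n + 1 then y ⟨l, h⟩ else M.one)
        (fun l => if h : l < n + 1 then M.star 1 (M.mul (y ⟨l, h⟩) Z) M.one else M.one) Z n
        (fun l hl => by
          beta_reduce
          rw [dif_pos (show l < n + 1 by omega), dif_pos (show l < n + 1 by omega)])
      show M.hatSeq (fun l => if h : l < n + 1 then M.star 1 (M.mul (y ⟨l, h⟩) Z) M.one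
            else M.one) n
          = M.mul (M.hatSeq (fun l => if h : l < n + 1 then y ⟨l, h⟩ else M.one) n) Z
      calc M.hatSeq (fun l => if h : l < n + 1 then M.star 1 (M.mul (y ⟨l, h⟩) Z) M.one
            else M.one) n
          = M.star (n + 1) (M.hatSeq (fun l => if h : l < n + 1 then
              M.star 1 (M.mul (y ⟨l, h⟩) Z) M.one else M.one) n) M.one :=
            (M.hatSeq_rank _ hwr n).symm
        _ = M.star (n + 1) (M.hatSeq (fun l => if h : l < n + 1 then
              M.star 1 (M.mul (y ⟨l, h⟩) Z) M.one else M.one) n) Z :=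
            (M.star_rank_absorb hZr _).symm
        _ = M.star (n + 1)
              (M.mul (M.hatSeq (fun l => if h : l < n + 1 then y ⟨l, h⟩ else M.one) n) Z) Z :=
            hsub
        _ = M.mul (M.hatSeq (fun l => if h : l < n + 1 then y ⟨l, h⟩ else M.one) n) Z :=
            M.mul_rank_absorb (M.hatSeq_rank _ hyr n) Z

end MMonoid


/-- for every cm-monoid `M`, the structure `M^ca`, with universe
the set `M_{|1}` of elements of rank ≤ 1, constants `e_n = 1[n]` and operations
`q_n(a, b_0, …, b_{n-1}) = (a · b̂_{n-1}) ⋆_1 1`, is a clone algebra; moreover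
if `M` is finite dimensional then `M^ca` is a finite dimensional clone
algebra. -/
theorem cmMonoid_ca {A : Type u} (M : MMonoid A) (hcm : M.IsCM) :
    ∃ D : CloneAlgebra {x : A // M.star 1 x M.one = x},
      (∀ n : ℕ, (D.e n : A) = M.coord M.one n) ∧
      (∀ (n : ℕ) (a : {x : A // M.star 1 x M.one = x})
          (b : Fin n → {x : A // M.star 1 x M.one = x}),
        (D.q n a b : A) =
          M.star 1 (M.mul (a : A) (M.hatFin n (fun i => (b i : A)))) M.one) ∧
      (M.FinDim → D.FinDim) := by
  refine ⟨{
      e := fun n => ⟨M.eV n, M.eV_rank n⟩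
      q := fun n a b =>
        ⟨M.star 1 (M.mul a.1 (M.hatFin n (fun i => (b i).1))) M.one, M.B3a (le_refl 1) _ _ _⟩
      C1 := ?_, C2 := ?_, C3 := ?_, C4 := ?_, C5 := ?_ },
    fun n => rfl, fun n a b => rfl, ?_⟩
  · -- C1
    intro n i x
    obtain ⟨n, rfl⟩ : ∃ m, n = m + 1 := ⟨n - 1, by have := i.pos; omega⟩
    apply Subtype.ext
    show M.star 1 (M.mul (M.eV i) (M.hatFin (n + 1) (fun j => (x j).1))) M.one = (x i).1
    rw [M.eV_mul hcm, M.B3a (le_refl 1)]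
    have hr : ∀ l, M.star 1 (if h : l < n + 1 then (x ⟨l, h⟩).1 else M.one) M.one
        = if h : l < n + 1 then (x ⟨l, h⟩).1 else M.one := by
      intro l; by_cases hl : l < n + 1
      · rw [dif_pos hl]; exact (x ⟨l, hl⟩).2
      · rw [dif_neg hl]; exact M.one_rank
    have h2 := M.coord_hat (fun l => if h : l < n + 1 then (x ⟨l, h⟩).1 else M.one) hr
      (show (i : ℕ) ≤ n by omega)
    beta_reduce at h2
    rw [dif_pos i.isLt, Fin.eta] at h2
    exact h2
  · -- C2
    intro n j x hnj
    apply Subtype.ext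
    cases n with
    | zero =>
        show M.star 1 (M.mul (M.eV j) M.one) M.one = M.eV j
        rw [M.mul_one]; exact M.eV_rank j
    | succ n =>
        show M.star 1 (M.mul (M.eV j) (M.hatFin (n + 1) (fun i => (x i).1))) M.one = M.eV j
        rw [M.eV_mul hcm, M.B3a (le_refl 1)]
        have hr : ∀ l, M.star 1 (if h : l < n + 1 then (x ⟨l, h⟩).1 else M.one) M.one
            = if h : l < n + 1 then (x ⟨l, h⟩).1 else M.one := by
          intro l; by_cases hl : l < n + 1
          · rw [dif_pos hl]; exact (x ⟨l, hl⟩).2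
          · rw [dif_neg hl]; exact M.one_rank
        exact M.coord_high (M.hatSeq_rank _ hr n) hnj
  · -- C3
    intro n x
    apply Subtype.ext
    show M.star 1 (M.mul x.1 (M.hatFin n (fun i => M.eV i))) M.one = x.1
    have h1 : M.hatFin n (fun i : Fin n => M.eV i) = M.one := by
      cases n with
      | zero => rfl
      | succ n => exact M.hatSeq_eV _ n (fun l hl => by rw [dif_pos (show l < n + 1 by omega)])
    rw [h1, M.mul_one]
    exact x.2
  · -- C4
    intro n k hnk x y
    apply Subtype.ext
    show M.star 1 (M.mul x.1 (M.hatFin n (fun i => (y i).1))) M.one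
        = M.star 1 (M.mul x.1 (M.hatFin k (fun i =>
          (if h : (i : ℕ) < n then y ⟨i, h⟩
            else (⟨M.eV i, M.eV_rank i⟩ : {x : A // M.star 1 x M.one = x})).1))) M.one
    have htup : (fun i : Fin k =>
          (if h : (i : ℕ) < n then y ⟨i, h⟩
            else (⟨M.eV i, M.eV_rank i⟩ : {x : A // M.star 1 x M.one = x})).1)
        = fun i : Fin k => if h : (i : ℕ) < n then (y ⟨i, h⟩).1 else M.eV i := by
      funext i; exact apply_dite Subtype.val _ _ _
    rw [htup]
    exact (congrArg (fun t => M.star 1 (M.mul x.1 t) M.one)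
      (M.hatFin_pad hnk (fun i => (y i).1) (fun i => (y i).2))).symm
  · -- C5
    intro n x y z
    apply Subtype.ext
    show M.star 1 (M.mul (M.star 1 (M.mul x.1 (M.hatFin n (fun i => (y i).1))) M.one)
          (M.hatFin n (fun i => (z i).1))) M.one
        = M.star 1 (M.mul x.1 (M.hatFin n (fun i =>
            M.star 1 (M.mul (y i).1 (M.hatFin n (fun j => (z j).1))) M.one))) M.one
    have hsub : M.hatFin n (fun i =>
          M.star 1 (M.mul (y i).1 (M.hatFin n (fun j => (z j).1))) M.one)
        = M.mul (M.hatFin n (fun i => (y i).1)) (M.hatFin n (fun i => (z i).1)) :=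
      M.hatFin_subst hcm n _ _ (fun i => (y i).2) (fun i => (z i).2)
    rw [hsub, M.L1, M.B3a (le_refl 1), M.mul_assoc]
  · -- finite dimensionality
    intro hfd a
    obtain ⟨m, hm⟩ := hfd a.1 1
    apply Set.Finite.subset (Set.finite_Iio (max m 1))
    intro n hn
    rw [Set.mem_Iio]
    by_contra hge
    push_neg at hge
    apply hn
    have hm1 : m ≤ n := le_trans (le_max_left m 1) hge
    have h1 : 1 ≤ n := le_trans (le_max_right m 1) hge
    obtain ⟨n, rfl⟩ : ∃ q, n = q + 1 := ⟨n - 1, by omega⟩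
    unfold CloneAlgebra.IndepOf
    apply Subtype.ext
    show M.star 1 (M.mul a.1 (M.hatFin (n + 2) (fun i : Fin (n + 2) =>
          (if (i : ℕ) < n + 1 then (⟨M.eV i, M.eV_rank i⟩ : {x : A // M.star 1 x M.one = x})
            else ⟨M.eV (n + 2), M.eV_rank (n + 2)⟩).1))) M.one = a.1
    have htup : (fun i : Fin (n + 2) =>
          (if (i : ℕ) < n + 1 then (⟨M.eV i, M.eV_rank i⟩ : {x : A // M.star 1 x M.one = x})
            else ⟨M.eV (n + 2), M.eV_rank (n + 2)⟩).1)
        = fun i : Fin (n + 2) => if (i : ℕ) < n + 1 then M.eV i else M.eV (n + 2) := by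
      funext i; exact apply_ite Subtype.val _ _ _
    rw [htup]
    have hc2 : M.hatSeq (fun l => if h : l < n + 2 then
          (if l < n + 1 then M.eV l else M.eV (n + 2)) else M.one) n = M.one :=
      M.hatSeq_eV _ n (fun l hl => by
        rw [dif_pos (show l < n + 2 by omega), if_pos (show l < n + 1 by omega)])
    have hc3 : (if h : n + 1 < n + 2 then
          (if n + 1 < n + 1 then M.eV (n + 1) else M.eV (n + 2)) else M.one) = M.eV (n + 2) := by
      rw [dif_pos (show n + 1 < n + 2 by omega), if_neg (show ¬ n + 1 < n + 1 by omega)]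
    have hC : M.hatFin (n + 2) (fun i : Fin (n + 2) =>
          if (i : ℕ) < n + 1 then M.eV i else M.eV (n + 2))
        = M.star (n + 1) M.one (M.bar (Equiv.swap 0 (n + 1)) (M.eV (n + 2))) := by
      show M.star (n + 1)
          (M.hatSeq (fun l => if h : l < n + 2 then
            (if l < n + 1 then M.eV l else M.eV (n + 2)) else M.one) n)
          (M.bar (Equiv.swap 0 (n + 1))
            (if h : n + 1 < n + 2 then
              (if n + 1 < n + 1 then M.eV (n + 1) else M.eV (n + 2)) else M.one)) = _
      rw [hc2, hc3]
    rw [hC]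
    rw [show M.eV (n + 2) = M.star 1 (M.bar (Equiv.swap 0 (n + 2)) M.one) M.one from rfl]
    rw [M.star_bar_eval n M.one (M.bar (Equiv.swap 0 (n + 2)) M.one) M.one]
    have key : M.star m M.one
          (M.star (n + 1) M.one (M.bar (Equiv.swap 0 (n + 1)) (M.bar (Equiv.swap 0 (n + 2)) M.one)))
        = M.star (n + 1) M.one (M.bar (Equiv.swap 0 (n + 1)) (M.bar (Equiv.swap 0 (n + 2)) M.one)) := by
      rcases eq_or_lt_of_le (show m ≤ n + 1 by omega) with rfl | hlt
      · exact M.B3b (le_refl (n + 1)) _ _ _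
      · rw [← M.B4 hlt, M.star_idem]
    have hmk := hm (M.star (n + 1) M.one
      (M.bar (Equiv.swap 0 (n + 1)) (M.bar (Equiv.swap 0 (n + 2)) M.one))) (n + 2 - m)
    rw [show m + (n + 2 - m) = n + 2 by omega, key] at hmk
    rw [M.star_rank_absorb a.2] at hmk
    exact hmk
end

section
/- Let A = (A, q, e_n, D) be a partial infinitary clone algebra (PICA). Then (1) the algebra A^ecm, with universe D, merge structure inherited from Seq(A), unit 1 = (e_0,e_1,…), and product b·a = (q(b_n, a) : n ∈ ω), is an extensional cm-monoid; and (2) if A is ω-finite dimensional then the cm-monoid A^ecm is ω-finite dimensional. -/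
universe u

open scoped Classical

/-- A partial infinitary clone algebra (PICA): constants `e_n`, a domain
`Dom ⊆ A^ω`, and a partial infinitary operation `q` defined exactly on `Dom`
(in its sequence argument), satisfying (P1)–(P4) and (I1)–(I3). -/
structure PICA (A : Type u) where
  e : ℕ → A
  Dom : Set (ℕ → A)
  q : A → (s : ℕ → A) → s ∈ Dom → A
  /-- (P1) `Dom` is a trace: closed under finite modifications. -/
  trace : ∀ s ∈ Dom, ∀ r : ℕ → A, {i : ℕ | s i ≠ r i}.Finite → r ∈ Dom
  /-- (P3) -/
  comp_mem : ∀ (y z : ℕ → A) (_hy : y ∈ Dom) (hz : z ∈ Dom),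
    (fun n => q (y n) z hz) ∈ Dom
  /-- (P4) -/
  e_mem : (fun n => e n) ∈ Dom
  /-- (I1) -/
  I1 : ∀ (i : ℕ) (y : ℕ → A) (hy : y ∈ Dom), q (e i) y hy = y i
  /-- (I2) -/
  I2 : ∀ a : A, q a (fun n => e n) e_mem = a
  /-- (I3) -/
  I3 : ∀ (a : A) (y z : ℕ → A) (hy : y ∈ Dom) (hz : z ∈ Dom),
    q (q a y hy) z hz = q a (fun n => q (y n) z hz) (comp_mem y z hy hz)

/-- An element `a` of a PICA is ω-finite dimensional if there is `n` such that
`q(a, z[e_0, …, e_{n−1}]) = a` for every `z ∈ Dom`. -/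
def PICA.OmegaFinDimEl {A : Type u} (P : PICA A) (a : A) : Prop :=
  ∃ n : ℕ, ∀ (z : ℕ → A) (_ : z ∈ P.Dom)
    (h' : (fun i => if i < n then P.e i else z i) ∈ P.Dom),
    P.q a (fun i => if i < n then P.e i else z i) h' = a

namespace PicaEcm

variable {A : Type u}

lemma finPerm_one : FinPerm (1 : Equiv.Perm ℕ) := by
  simp [FinPerm]

lemma finPerm_mul {σ τ : Equiv.Perm ℕ} (hσ : FinPerm σ) (hτ : FinPerm τ) :
    FinPerm (σ * τ) := by
  apply (hσ.union hτ).subset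
  intro i hi
  simp only [Set.mem_setOf_eq, Equiv.Perm.mul_apply] at hi
  by_contra h
  simp only [Set.mem_union, Set.mem_setOf_eq, not_or, not_not] at h
  exact hi (by rw [h.2, h.1])

lemma finPerm_swap (a b : ℕ) : FinPerm (Equiv.swap a b) := by
  apply ((Set.finite_singleton b).insert a).subset
  intro i hi
  simp only [Set.mem_setOf_eq] at hi
  by_contra h
  simp only [Set.mem_insert_iff, Set.mem_singleton_iff, not_or] at h
  exact hi (Equiv.swap_apply_of_ne_of_ne h.1 h.2)

lemma finPerm_of_fix {σ : Equiv.Perm ℕ} {k : ℕ} (h : ∀ i, k ≤ i → σ i = i) :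
    FinPerm σ := by
  apply (Set.finite_Iio k).subset
  intro i hi
  simp only [Set.mem_setOf_eq] at hi
  by_contra hk
  simp only [Set.mem_Iio, not_lt] at hk
  exact hi (h i hk)

variable (P : PICA A)

lemma q_congr (a : A) {s t : ℕ → A} (hs : s ∈ P.Dom) (ht : t ∈ P.Dom) (h : s = t) :
    P.q a s hs = P.q a t ht := by subst h; rfl

/-- merge -/
def starD (n : ℕ) (s u : P.Dom) : P.Dom :=
  ⟨fun i => if i < n then (s : ℕ → A) i else (u : ℕ → A) i,
   P.trace u u.2 _ ((Set.finite_Iio n).subset (by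
     intro i hi
     simp only [Set.mem_setOf_eq] at hi
     by_contra h
     simp only [Set.mem_Iio, not_lt] at h
     exact hi (by rw [if_neg (by omega)])))⟩

/-- permutation action -/
noncomputable def barD (σ : Equiv.Perm ℕ) (s : P.Dom) : P.Dom :=
  if h : FinPerm σ then
    ⟨fun i => (s : ℕ → A) (σ i),
     P.trace s s.2 _ (h.subset (by
       intro i hi
       simp only [Set.mem_setOf_eq] at hi ⊢
       intro he; exact hi (by rw [he])))⟩
  else s

noncomputable def oneD : P.Dom := ⟨fun n => P.e n, P.e_mem⟩

noncomputable def mulD (b a : P.Dom) : P.Dom :=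
  ⟨fun n => P.q ((b : ℕ → A) n) (a : ℕ → A) a.2, P.comp_mem _ _ b.2 a.2⟩

@[simp] lemma starD_coe (n : ℕ) (s u : P.Dom) (i : ℕ) :
    ((starD P n s u : P.Dom) : ℕ → A) i
      = if i < n then (s : ℕ → A) i else (u : ℕ → A) i := rfl

@[simp] lemma barD_coe {σ : Equiv.Perm ℕ} (h : FinPerm σ) (s : P.Dom) (i : ℕ) :
    ((barD P σ s : P.Dom) : ℕ → A) i = (s : ℕ → A) (σ i) := by
  simp [barD, h]

noncomputable def M₀ : MergeOps P.Dom := ⟨starD P, barD P⟩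

lemma chain_apply (g : ℕ → P.Dom) (k i : ℕ) :
    (((M₀ P).chain g k : P.Dom) : ℕ → A) i = ((g (min i k) : P.Dom) : ℕ → A) i := by
  induction k with
  | zero => simp [MergeOps.chain, M₀]
  | succ k ih =>
    show ((starD P (k+1) ((M₀ P).chain g k) (g (k+1)) : P.Dom) : ℕ → A) i = _
    rw [starD_coe]
    split_ifs with h
    · rw [ih, show min i k = min i (k+1) by omega]
    · rw [show min i (k+1) = k+1 by omega]

lemma chainStar_apply (g : ℕ → P.Dom) (k : ℕ) (y : P.Dom) (i : ℕ) :
    (((M₀ P).chainStar g k y : P.Dom) : ℕ → A) i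
      = if i < k then ((g i : P.Dom) : ℕ → A) i else (y : ℕ → A) i := by
  cases k with
  | zero => simp [MergeOps.chainStar]
  | succ k =>
    show ((starD P (k+1) ((M₀ P).chain g k) y : P.Dom) : ℕ → A) i = _
    rw [starD_coe]
    split_ifs with h
    · rw [chain_apply, show min i k = i by omega]
    · rfl

noncomputable def MA : MergeAlgebra P.Dom where
  toMergeOps := M₀ P
  star_assoc n x y z := by
    apply Subtype.ext; funext i
    show ((starD P n (starD P n x y) z : P.Dom) : ℕ → A) i
      = ((starD P n x (starD P n y z) : P.Dom) : ℕ → A) i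
    simp only [starD_coe]
    split_ifs <;> rfl
  star_idem n x := by
    apply Subtype.ext; funext i
    show ((starD P n x x : P.Dom) : ℕ → A) i = _
    simp only [starD_coe]; split_ifs <;> rfl
  star_zero x y := by
    apply Subtype.ext; funext i
    show ((starD P 0 x y : P.Dom) : ℕ → A) i = _
    simp [starD_coe]
  B3a {n k} hnk x y z := by
    apply Subtype.ext; funext i
    show ((starD P n (starD P k x y) z : P.Dom) : ℕ → A) i
      = ((starD P n x z : P.Dom) : ℕ → A) i
    simp only [starD_coe]
    split_ifs with h1 h2 <;> first | rfl | omega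
  B3b {n k} hnk x y z := by
    apply Subtype.ext; funext i
    show ((starD P k x (starD P n y z) : P.Dom) : ℕ → A) i
      = ((starD P k x z : P.Dom) : ℕ → A) i
    simp only [starD_coe]
    split_ifs with h1 h2 <;> first | rfl | omega
  B4 {n k} hkn x y z := by
    apply Subtype.ext; funext i
    show ((starD P n (starD P k x y) z : P.Dom) : ℕ → A) i
      = ((starD P k x (starD P n y z) : P.Dom) : ℕ → A) i
    simp only [starD_coe]
    split_ifs <;> first | rfl | omega
  B5 σ τ hσ hτ x := by
    apply Subtype.ext; funext i
    show ((barD P σ (barD P τ x) : P.Dom) : ℕ → A) i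
      = ((barD P (τ * σ) x : P.Dom) : ℕ → A) i
    rw [barD_coe P hσ, barD_coe P hτ, barD_coe P (finPerm_mul hτ hσ)]
    rfl
  bar_id x := by
    apply Subtype.ext; funext i
    show ((barD P 1 x : P.Dom) : ℕ → A) i = _
    rw [barD_coe P finPerm_one]
    rfl
  B6 {n k} hnk σ hfix x y := by
    have hσ : FinPerm σ := finPerm_of_fix hfix
    apply Subtype.ext; funext i
    show ((barD P σ (starD P n x y) : P.Dom) : ℕ → A) i = _
    rw [barD_coe P hσ, show ((M₀ P).chainStar _ k y : P.Dom).1 i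
      = if i < k then ((barD P σ (if σ i < n then x else y) : P.Dom) : ℕ → A) i
        else (y : ℕ → A) i from chainStar_apply P _ k y i]
    rw [starD_coe]
    by_cases hik : i < k
    · rw [if_pos hik, barD_coe P hσ, apply_ite (fun w : P.Dom => (w : ℕ → A) (σ i))]
    · rw [if_neg hik]
      have hfi : σ i = i := hfix i (by omega)
      rw [hfi, if_neg (by omega)]
  B7 {m n} σ τ hσ hτ hagree x y z := by
    apply Subtype.ext; funext i
    show ((starD P n (starD P m z (barD P σ x)) y : P.Dom) : ℕ → A) i
      = ((starD P n (starD P m z (barD P τ x)) y : P.Dom) : ℕ → A) i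
    simp only [starD_coe, barD_coe P hσ, barD_coe P hτ]
    split_ifs with h1 h2
    · rfl
    · rw [hagree i (by omega) (by omega)]
    · rfl

noncomputable def N : MMonoid P.Dom where
  toMergeAlgebra := MA P
  mul := mulD P
  one := oneD P
  mul_assoc x y z := by
    apply Subtype.ext; funext i
    exact P.I3 _ _ _ y.2 z.2
  one_mul x := by
    apply Subtype.ext; funext i
    exact P.I1 i _ x.2
  mul_one x := by
    apply Subtype.ext; funext i
    exact P.I2 _
  L1 n x y z := by
    apply Subtype.ext; funext i
    show P.q ((starD P n x y : P.Dom).1 i) z.1 z.2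
      = ((starD P n (mulD P x z) (mulD P y z) : P.Dom) : ℕ → A) i
    simp only [starD_coe]
    split_ifs <;> rfl

lemma N_isCM : (N P).IsCM := by
  intro σ hσ x y
  apply Subtype.ext; funext i
  show P.q ((barD P σ x : P.Dom).1 i) y.1 y.2
    = ((barD P σ (mulD P x y) : P.Dom) : ℕ → A) i
  rw [barD_coe P hσ, barD_coe P hσ]
  rfl

lemma N_ext : (N P).Extensional := by
  intro x y h
  apply Subtype.ext; funext n
  have h0 := congrFun (congrArg Subtype.val (h n)) 0
  show x.1 n = y.1 n
  have key : ∀ w : P.Dom, (((N P).coord w n : P.Dom) : ℕ → A) 0 = (w : ℕ → A) n := by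
    intro w
    show ((starD P 1 (barD P (Equiv.swap 0 n) w) (oneD P) : P.Dom) : ℕ → A) 0 = _
    rw [starD_coe, if_pos (by omega), barD_coe P (finPerm_swap 0 n),
      Equiv.swap_apply_left]
  rw [key x, key y] at h0
  exact h0

lemma N_omegaFinDim (hfd : ∀ x : A, P.OmegaFinDimEl x) : (N P).OmegaFinDim := by
  intro a n
  set m := (Finset.range n).sup (fun i => (hfd (a.1 i)).choose) with hm
  refine ⟨m, fun b => ?_⟩
  apply Subtype.ext; funext i
  show ((starD P n (mulD P a (starD P m (oneD P) b)) a : P.Dom) : ℕ → A) i = a.1 i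
  rw [starD_coe]
  by_cases hin : i < n
  · rw [if_pos hin]
    show P.q (a.1 i) ((starD P m (oneD P) b : P.Dom) : ℕ → A) _ = a.1 i
    set ni := (hfd (a.1 i)).choose with hni
    have hle : ni ≤ m := Finset.le_sup (f := fun i => (hfd (a.1 i)).choose) (Finset.mem_range.mpr hin)
    have hz : ((starD P m (oneD P) b : P.Dom) : ℕ → A) ∈ P.Dom :=
      (starD P m (oneD P) b).2
    have heq : (fun j => if j < ni then P.e j
        else ((starD P m (oneD P) b : P.Dom) : ℕ → A) j)
        = ((starD P m (oneD P) b : P.Dom) : ℕ → A) := by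
      funext j
      rw [starD_coe]
      split_ifs with h1 h2 <;> first | rfl | omega
    have h' : (fun j => if j < ni then P.e j
        else ((starD P m (oneD P) b : P.Dom) : ℕ → A) j) ∈ P.Dom := by rw [heq]; exact hz
    calc P.q (a.1 i) ((starD P m (oneD P) b : P.Dom) : ℕ → A) hz
        = P.q (a.1 i) (fun j => if j < ni then P.e j
            else ((starD P m (oneD P) b : P.Dom) : ℕ → A) j) h' :=
          q_congr P _ _ _ heq.symm
      _ = a.1 i := (hfd (a.1 i)).choose_spec ((starD P m (oneD P) b : P.Dom) : ℕ → A) hz h'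
  · rw [if_neg hin]

end PicaEcm

/-- STATEMENT 19: for every PICA `P = (A, q, e_n, Dom)`: (1) the algebra
`P^ecm` with universe `Dom`, sequence merge operations, unit `(e_0, e_1, …)`
and product `b·a = (q(b_n, a) : n ∈ ω)` is an extensional cm-monoid; (2) if
`P` is ω-finite dimensional then `P^ecm` is an ω-finite dimensional
cm-monoid. -/
theorem pica_ecm {A : Type u} (P : PICA A) :
    ∃ N : MMonoid P.Dom,
      N.IsCM ∧ N.Extensional ∧
      (∀ (n : ℕ) (s u : P.Dom),
        ((N.star n s u : P.Dom) : ℕ → A) =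
          fun i => if i < n then (s : ℕ → A) i else (u : ℕ → A) i) ∧
      (∀ σ : Equiv.Perm ℕ, FinPerm σ → ∀ s : P.Dom,
        ((N.bar σ s : P.Dom) : ℕ → A) = fun i => (s : ℕ → A) (σ i)) ∧
      ((N.one : ℕ → A) = fun n => P.e n) ∧
      (∀ b a : P.Dom,
        ((N.mul b a : P.Dom) : ℕ → A) = fun n => P.q ((b : ℕ → A) n) (a : ℕ → A) a.2) ∧
      ((∀ x : A, P.OmegaFinDimEl x) → N.OmegaFinDim) := by
  refine ⟨PicaEcm.N P, PicaEcm.N_isCM P, PicaEcm.N_ext P, ?_, ?_, rfl, fun b a => rfl,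
    PicaEcm.N_omegaFinDim P⟩
  · intro n s u; rfl
  · intro σ h s
    funext i
    exact PicaEcm.barD_coe P h s i
end
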